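/- arXiv:2106.15519 — 4 statements merged into one kernel-verified Lean document; each statement's English description precedes it below -/
import Mathlib

section
/- Weierstrass Preparation Theorem: Let A = K[[X_1,...,X_n]] with maximal ideal M, and let f ∈ A[[X_{n+1}]] with f ≢ 0 mod M[[X_{n+1}]]. Let d be the smallest integer such that the coefficient a_d of X_{n+1}^d in f is not in M. Then there exists a unique pair (α, p) where α is an invertible element of A[[X_{n+1}]], p ∈ A[X_{n+1}] is a monic polynomial of degree d whose coefficients b_0,...,b_{d−1} all lie in M, and f = α·p. -/
open PowerSeries

namespace WeierstrassAux

noncomputable section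

variable {R : Type*} [CommRing R]

/-- shift a power series down by `d`. -/
def shiftd (d : ℕ) (h : PowerSeries R) : PowerSeries R :=
  PowerSeries.mk fun j => PowerSeries.coeff (R := R) (j + d) h

@[simp] lemma coeff_shiftd (d j : ℕ) (h : PowerSeries R) :
    coeff (R := R) j (shiftd d h) = coeff (R := R) (j + d) h := coeff_mk _ _

lemma shiftd_sub (d : ℕ) (a b : PowerSeries R) :
    shiftd d (a - b) = shiftd d a - shiftd d b := by
  ext j; simp

lemma shiftd_add (d : ℕ) (a b : PowerSeries R) :
    shiftd d (a + b) = shiftd d a + shiftd d b := by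
  ext j; simp

lemma shiftd_neg (d : ℕ) (a : PowerSeries R) : shiftd d (-a) = -shiftd d a := by
  ext j; simp

lemma shiftd_mul_X_pow (d : ℕ) (w : PowerSeries R) : shiftd d (w * X ^ d) = w := by
  ext j; simp [coeff_mul_X_pow]

lemma eq_trunc_add_shiftd (d : ℕ) (h : PowerSeries R) :
    h = ((trunc d h : Polynomial R) : PowerSeries R) + shiftd d h * X ^ d := by
  ext j
  rw [map_add, Polynomial.coeff_coe, coeff_trunc, coeff_mul_X_pow']
  by_cases hj : j < d
  · rw [if_pos hj, if_neg (by omega), add_zero]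
  · rw [if_neg hj, if_pos (by omega), coeff_shiftd, zero_add,
      Nat.sub_add_cancel (by omega : d ≤ j)]

/-! ### Coefficientwise ideal membership -/

/-- all coefficients of `h` lie in the ideal `I`. -/
def CIn (I : Ideal R) (h : PowerSeries R) : Prop := ∀ j, coeff (R := R) j h ∈ I

lemma CIn.sub {I : Ideal R} {a b : PowerSeries R} (ha : CIn I a) (hb : CIn I b) :
    CIn I (a - b) := fun j => by rw [map_sub]; exact sub_mem (ha j) (hb j)

lemma CIn.add {I : Ideal R} {a b : PowerSeries R} (ha : CIn I a) (hb : CIn I b) :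
    CIn I (a + b) := fun j => by rw [map_add]; exact add_mem (ha j) (hb j)

lemma CIn.neg {I : Ideal R} {a : PowerSeries R} (ha : CIn I a) : CIn I (-a) :=
  fun j => by rw [map_neg]; exact neg_mem (ha j)

lemma CIn.shiftd {I : Ideal R} {a : PowerSeries R} (ha : CIn I a) (d : ℕ) :
    CIn I (shiftd d a) := fun j => by rw [coeff_shiftd]; exact ha _

lemma CIn.mul_left {I : Ideal R} {b : PowerSeries R} (hb : CIn I b) (a : PowerSeries R) :
    CIn I (a * b) := fun j => by
  rw [coeff_mul]
  exact Submodule.sum_mem _ fun p _ => Ideal.mul_mem_left _ _ (hb p.2)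

lemma CIn.mul_right {I : Ideal R} {a : PowerSeries R} (ha : CIn I a) (b : PowerSeries R) :
    CIn I (a * b) := fun j => by
  rw [coeff_mul]
  exact Submodule.sum_mem _ fun p _ => Ideal.mul_mem_right _ _ (ha p.1)

lemma CIn.mul {J : ℕ → Ideal R}
    (hmulJ : ∀ {k l : ℕ} {a b : R}, a ∈ J k → b ∈ J l → a * b ∈ J (k + l))
    {k l : ℕ} {a b : PowerSeries R} (ha : CIn (J k) a) (hb : CIn (J l) b) :
    CIn (J (k + l)) (a * b) := fun j => by
  rw [coeff_mul]
  exact Submodule.sum_mem _ fun p _ => hmulJ (ha p.1) (hb p.2)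

/-! ### Weierstrass division -/

theorem division_exists_unique (J : ℕ → Ideal R)
    (htop : ∀ x, x ∈ J 0)
    (hanti : ∀ k, J (k + 1) ≤ J k)
    (hmulJ : ∀ {k l : ℕ} {a b : R}, a ∈ J k → b ∈ J l → a * b ∈ J (k + l))
    (hsep : ∀ x : R, (∀ k, x ∈ J k) → x = 0)
    (hcpl : ∀ c : ℕ → R, (∀ k, c (k + 1) - c k ∈ J (k + 1)) → ∃ L, ∀ k, L - c k ∈ J (k + 1))
    (f : PowerSeries R) (d : ℕ)
    (hf : ∀ i < d, coeff (R := R) i f ∈ J 1)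
    (hu : IsUnit (coeff (R := R) d f)) (g : PowerSeries R) :
    ∃! qr : PowerSeries R × Polynomial R,
      qr.2.degree < d ∧ g = qr.1 * f + ↑qr.2 := by
  set U : PowerSeries R := shiftd d f with hUdef
  have hUc : constantCoeff U = coeff (R := R) d f := by
    rw [← coeff_zero_eq_constantCoeff_apply, coeff_shiftd, zero_add]
  have hU : IsUnit U := isUnit_iff_constantCoeff.mpr (hUc ▸ hu)
  obtain ⟨u, hu_eq⟩ := hU
  set Pf : PowerSeries R := ((trunc d f : Polynomial R) : PowerSeries R) with hPfdef
  have hPf : CIn (J 1) Pf := by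
    intro j
    rw [hPfdef, Polynomial.coeff_coe, coeff_trunc]
    split_ifs with hj
    · exact hf j hj
    · exact zero_mem _
  have hfdec : f = Pf + U * X ^ d := eq_trunc_add_shiftd d f
  have hshift_f : ∀ w : PowerSeries R, shiftd d (w * f) = shiftd d (w * Pf) + w * U := by
    intro w
    conv_lhs => rw [hfdec, mul_add, ← mul_assoc]
    rw [shiftd_add, shiftd_mul_X_pow]
  -- uniqueness auxiliary: trivial divisions
  have huniq_aux : ∀ (q : PowerSeries R) (r : Polynomial R), r.degree < d →
      q * f + ↑r = 0 → q = 0 ∧ r = 0 := by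
    intro q r hrd heq0
    have hshr : shiftd d (r : PowerSeries R) = 0 := by
      ext j
      rw [coeff_shiftd, map_zero, Polynomial.coeff_coe]
      exact Polynomial.coeff_eq_zero_of_degree_lt
        (lt_of_lt_of_le hrd (by exact_mod_cast Nat.le_add_left d j))
    have hqf : q * f = -(r : PowerSeries R) := by linear_combination heq0
    have hkey : shiftd d (q * Pf) + q * U = 0 := by
      rw [← hshift_f, hqf, shiftd_neg, hshr, neg_zero]
    have hqe : q = -(shiftd d (q * Pf)) * ↑u⁻¹ := by
      have h1 : q * U = -(shiftd d (q * Pf)) := by linear_combination hkey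
      calc q = q * U * ↑u⁻¹ := by
              rw [mul_assoc, ← hu_eq, Units.mul_inv, mul_one]
        _ = -(shiftd d (q * Pf)) * ↑u⁻¹ := by rw [h1]
    have hq0 : ∀ k, CIn (J k) q := by
      intro k
      induction k with
      | zero => exact fun j => htop _
      | succ k ih =>
          rw [hqe]
          have h2 : CIn (J (k + 1)) (q * Pf) := CIn.mul hmulJ ih hPf
          exact ((h2.shiftd d).neg).mul_right _
    have hq : q = 0 := by
      ext j
      rw [map_zero]
      exact hsep _ fun k => hq0 k j
    refine ⟨hq, ?_⟩
    have hrr : (r : PowerSeries R) = 0 := by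
      rw [hq, zero_mul, zero_add] at heq0
      exact heq0
    exact_mod_cast hrr
  -- existence: successive approximation
  set sg : PowerSeries R := shiftd d g with hsgdef
  set qs : ℕ → PowerSeries R :=
    fun k => Nat.rec (↑u⁻¹ * sg) (fun _ prev => ↑u⁻¹ * (sg - shiftd d (prev * Pf))) k
    with hqsdef
  have hqs0 : qs 0 = ↑u⁻¹ * sg := rfl
  have hqsS : ∀ k, qs (k + 1) = ↑u⁻¹ * (sg - shiftd d (qs k * Pf)) := fun k => rfl
  have hdiff : ∀ k, CIn (J (k + 1)) (qs (k + 1) - qs k) := by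
    intro k
    induction k with
    | zero =>
        have h3 : qs (0 + 1) - qs 0 = -(shiftd d (qs 0 * Pf)) * ↑u⁻¹ := by
          rw [hqsS 0, hqs0]; ring
        rw [h3]
        exact (((hPf.mul_left _).shiftd d).neg).mul_right _
    | succ k ih =>
        have h3 : qs (k + 1 + 1) - qs (k + 1) =
            -(shiftd d ((qs (k + 1) - qs k) * Pf)) * ↑u⁻¹ := by
          rw [hqsS (k + 1), hqsS k, sub_mul, shiftd_sub]; ring
        rw [h3]
        exact (((CIn.mul hmulJ ih hPf).shiftd d).neg).mul_right _
  have hc : ∀ j, ∃ L, ∀ k, L - coeff (R := R) j (qs k) ∈ J (k + 1) := by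
    intro j
    refine hcpl _ fun k => ?_
    have h4 := hdiff k j
    rwa [map_sub] at h4
  choose Lf hLf using hc
  set q : PowerSeries R := PowerSeries.mk Lf with hqdef
  have hql : ∀ k, CIn (J (k + 1)) (q - qs k) := by
    intro k j
    rw [map_sub, hqdef, coeff_mk]
    exact hLf j k
  -- fixed point equation
  have hfix : q = ↑u⁻¹ * (sg - shiftd d (q * Pf)) := by
    have hD : ∀ k, CIn (J (k + 1)) (q - ↑u⁻¹ * (sg - shiftd d (q * Pf))) := by
      intro k
      have e1 : q - ↑u⁻¹ * (sg - shiftd d (q * Pf)) =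
          (q - qs (k + 1)) + (shiftd d ((q - qs k) * Pf)) * ↑u⁻¹ := by
        rw [hqsS k, sub_mul, shiftd_sub]; ring
      rw [e1]
      refine CIn.add (fun j => hanti _ ((hql (k + 1)) j)) ?_
      exact fun j => hanti _
        ((((CIn.mul hmulJ (hql k) hPf).shiftd d).mul_right (↑u⁻¹)) j)
    have h5 : q - ↑u⁻¹ * (sg - shiftd d (q * Pf)) = 0 := by
      ext j
      rw [map_zero]
      refine hsep _ fun k => ?_
      cases k with
      | zero => exact htop _
      | succ k => exact hD k j
    linear_combination h5
  -- conclude existence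
  have hUq : U * q = sg - shiftd d (q * Pf) := by
    conv_lhs => rw [hfix]
    rw [← mul_assoc, ← hu_eq, Units.mul_inv, one_mul]
  have hsgqf : shiftd d (g - q * f) = 0 := by
    rw [shiftd_sub, hshift_f q]
    have : q * U = U * q := mul_comm _ _
    rw [this, hUq, hsgdef]
    ring
  have hcoeff_hi : ∀ j, d ≤ j → coeff (R := R) j (g - q * f) = 0 := by
    intro j hj
    have h6 := congrArg (coeff (R := R) (j - d)) hsgqf
    rwa [coeff_shiftd, map_zero, Nat.sub_add_cancel hj] at h6
  set r : Polynomial R := trunc d (g - q * f) with hrdef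
  have hr : (r : PowerSeries R) = g - q * f := by
    ext j
    rw [Polynomial.coeff_coe, hrdef, coeff_trunc]
    split_ifs with hj
    · rfl
    · exact (hcoeff_hi j (by omega)).symm
  refine ⟨⟨q, r⟩, ⟨degree_trunc_lt _ _, by rw [hr]; ring⟩, ?_⟩
  rintro ⟨q', r'⟩ ⟨hd', he'⟩
  have hcomb : (q' - q) * f + ↑(r' - r) = 0 := by
    push_cast
    rw [hr]
    linear_combination -he'
  obtain ⟨hq2, hr2⟩ := huniq_aux _ _
    (lt_of_le_of_lt (Polynomial.degree_sub_le _ _) (max_lt hd' (degree_trunc_lt _ _))) hcomb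
  have hq3 : q' = q := by linear_combination hq2
  have hr3 : r' = r := by linear_combination hr2
  rw [hq3, hr3]


/-! ### The degree filtration on multivariate power series -/

variable {n : ℕ} {K : Type*} [Field K]

/-- total degree of a monomial. -/
def mdeg (e : Fin n →₀ ℕ) : ℕ := ∑ j, e j

lemma mdeg_add_of_eq {u v e : Fin n →₀ ℕ} (h : u + v = e) : mdeg u + mdeg v = mdeg e := by
  simp only [mdeg, ← h, Finsupp.add_apply]
  rw [← Finset.sum_add_distrib]

lemma mdeg_eq_zero_iff {e : Fin n →₀ ℕ} : mdeg e = 0 ↔ e = 0 := by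
  constructor
  · intro h
    ext j
    exact (Finset.sum_eq_zero_iff.mp h) j (Finset.mem_univ j)
  · rintro rfl
    simp [mdeg]

/-- the ideal of power series all of whose coefficients of total degree `< k` vanish. -/
def Jd (n : ℕ) (K : Type*) [Field K] (k : ℕ) : Ideal (MvPowerSeries (Fin n) K) where
  carrier := {x | ∀ e, mdeg e < k → MvPowerSeries.coeff e x = 0}
  add_mem' := fun ha hb e he => by rw [map_add, ha e he, hb e he, add_zero]
  zero_mem' := fun e he => by rw [map_zero]
  smul_mem' := fun c x hx e he => by
    classical
    rw [smul_eq_mul, MvPowerSeries.coeff_mul]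
    refine Finset.sum_eq_zero ?_
    rintro ⟨u, v⟩ huv
    rw [Finset.HasAntidiagonal.mem_antidiagonal] at huv
    dsimp only at huv
    have h1 := mdeg_add_of_eq huv
    rw [hx v (by omega), mul_zero]

lemma mem_Jd {k : ℕ} {x : MvPowerSeries (Fin n) K} :
    x ∈ Jd n K k ↔ ∀ e, mdeg e < k → MvPowerSeries.coeff e x = 0 := Iff.rfl

lemma Jd_mul_mem {k l : ℕ} {a b : MvPowerSeries (Fin n) K}
    (ha : a ∈ Jd n K k) (hb : b ∈ Jd n K l) : a * b ∈ Jd n K (k + l) := by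
  classical
  intro e he
  rw [MvPowerSeries.coeff_mul]
  refine Finset.sum_eq_zero ?_
  rintro ⟨u, v⟩ huv
  rw [Finset.HasAntidiagonal.mem_antidiagonal] at huv
  dsimp only at huv
  have h1 := mdeg_add_of_eq huv
  by_cases hu : mdeg u < k
  · rw [ha u hu, zero_mul]
  · rw [hb v (by omega), mul_zero]

lemma Jd_sep (x : MvPowerSeries (Fin n) K) (hx : ∀ k, x ∈ Jd n K k) : x = 0 :=
  MvPowerSeries.ext fun e => by
    rw [map_zero]
    exact hx (mdeg e + 1) e (Nat.lt_succ_self _)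

lemma Jd_complete (c : ℕ → MvPowerSeries (Fin n) K)
    (hc : ∀ k, c (k + 1) - c k ∈ Jd n K (k + 1)) :
    ∃ L, ∀ k, L - c k ∈ Jd n K (k + 1) := by
  have stab : ∀ (e : Fin n →₀ ℕ) (k l : ℕ), k ≤ l → mdeg e ≤ k →
      MvPowerSeries.coeff e (c l) = MvPowerSeries.coeff e (c k) := by
    intro e k l hkl he
    induction l, hkl using Nat.le_induction with
    | base => rfl
    | succ l hkl ih =>
        have h0 := hc l e (by omega)
        rw [map_sub, sub_eq_zero] at h0
        rw [h0, ih]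
  refine ⟨(fun e => MvPowerSeries.coeff e (c (mdeg e)) : MvPowerSeries (Fin n) K), ?_⟩
  intro k e he
  show MvPowerSeries.coeff e (c (mdeg e)) - MvPowerSeries.coeff e (c k) = 0
  rw [stab e (mdeg e) k (by omega) le_rfl]
  exact sub_self _

lemma span_le_Jd_one :
    Ideal.span (Set.range (MvPowerSeries.X : Fin n → MvPowerSeries (Fin n) K)) ≤ Jd n K 1 := by
  rw [Ideal.span_le]
  rintro _ ⟨i, rfl⟩ e he
  have he0 : e = 0 := mdeg_eq_zero_iff.mp (by omega)
  rw [he0, MvPowerSeries.coeff_zero_eq_constantCoeff_apply, MvPowerSeries.constantCoeff_X]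

lemma mem_span_of_constantCoeff_eq_zero {x : MvPowerSeries (Fin n) K}
    (hx : MvPowerSeries.constantCoeff (σ := Fin n) (R := K) x = 0) :
    x ∈ Ideal.span (Set.range (MvPowerSeries.X : Fin n → MvPowerSeries (Fin n) K)) := by
  classical
  set z : ℕ → MvPowerSeries (Fin n) K :=
    fun i e => if ∀ j : Fin n, (j : ℕ) < i → e j = 0 then MvPowerSeries.coeff e x else 0
    with hz
  have hz0 : z 0 = x := by
    ext e
    rw [hz]
    show (if ∀ j : Fin n, (j : ℕ) < 0 → e j = 0 then MvPowerSeries.coeff e x else 0) = MvPowerSeries.coeff e x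
    rw [if_pos (fun j hj => absurd hj (Nat.not_lt_zero _))]
  have hzn : z n = 0 := by
    ext e
    rw [hz, map_zero]
    show (if ∀ j : Fin n, (j : ℕ) < n → e j = 0 then MvPowerSeries.coeff e x else 0) = 0
    by_cases hcond : ∀ j : Fin n, (j : ℕ) < n → e j = 0
    · rw [if_pos hcond]
      have he0 : e = 0 := by
        ext j
        exact hcond j j.isLt
      rw [he0] at *
      rw [← MvPowerSeries.coeff_zero_eq_constantCoeff_apply] at hx
      exact hx
    · rw [if_neg hcond]
  have hsum : x = ∑ i ∈ Finset.range n, (z i - z (i + 1)) := by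
    rw [Finset.sum_range_sub' z n, hz0, hzn, sub_zero]
  rw [hsum]
  refine Ideal.sum_mem _ ?_
  intro i hi
  rw [Finset.mem_range] at hi
  set i' : Fin n := ⟨i, hi⟩ with hi'
  have hdvd : (MvPowerSeries.X i' : MvPowerSeries (Fin n) K) ∣ z i - z (i + 1) := by
    have h1 : (MvPowerSeries.X i' : MvPowerSeries (Fin n) K) ^ 1 ∣ z i - z (i + 1) := by
      rw [MvPowerSeries.X_pow_dvd_iff]
      intro m hm
      have hmz : m i' = 0 := by omega
      rw [map_sub, hz]
      show (if ∀ j : Fin n, (j : ℕ) < i → m j = 0 then MvPowerSeries.coeff m x else 0) -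
          (if ∀ j : Fin n, (j : ℕ) < i + 1 → m j = 0 then MvPowerSeries.coeff m x else 0) = 0
      have hiff : (∀ j : Fin n, (j : ℕ) < i → m j = 0) ↔
          (∀ j : Fin n, (j : ℕ) < i + 1 → m j = 0) := by
        constructor
        · intro h j hj
          rcases Nat.lt_or_ge (j : ℕ) i with h' | h'
          · exact h j h'
          · have : (j : ℕ) = i := by omega
            have : j = i' := by
              ext
              simp [this, hi']
            rw [this]
            exact hmz
        · intro h j hj
          exact h j (by omega)
      by_cases hc : ∀ j : Fin n, (j : ℕ) < i → m j = 0
      · rw [if_pos hc, if_pos (hiff.mp hc), sub_self]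
      · rw [if_neg hc, if_neg (fun h => hc (hiff.mpr h)), sub_self]
    rwa [pow_one] at h1
  obtain ⟨w, hw⟩ := hdvd
  rw [hw]
  exact Ideal.mul_mem_right _ _ (Ideal.subset_span ⟨i', rfl⟩)

lemma mem_span_iff_constantCoeff {x : MvPowerSeries (Fin n) K} :
    x ∈ Ideal.span (Set.range (MvPowerSeries.X : Fin n → MvPowerSeries (Fin n) K)) ↔
      MvPowerSeries.constantCoeff (σ := Fin n) (R := K) x = 0 := by
  constructor
  · intro h
    rw [← MvPowerSeries.coeff_zero_eq_constantCoeff_apply]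
    exact span_le_Jd_one h 0 (by simp [mdeg])
  · exact mem_span_of_constantCoeff_eq_zero

end

end WeierstrassAux


open WeierstrassAux PowerSeries

/-- Weierstrass Preparation Theorem: for f ∈ A[[Y]], A = K[[X_1,...,X_n]] with
maximal ideal M, f ≢ 0 mod M[[Y]], and d the least index with coefficient a_d ∉ M,
there is a unique pair (α, p) with α a unit of A[[Y]], p ∈ A[Y] monic of degree d
with non-leading coefficients in M, and f = α·p. -/
theorem weierstrass_preparation (n : ℕ) (K : Type*) [Field K]
    (M : Ideal (MvPowerSeries (Fin n) K))
    (hM : M = Ideal.span (Set.range (MvPowerSeries.X : Fin n → MvPowerSeries (Fin n) K)))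
    (f : PowerSeries (MvPowerSeries (Fin n) K))
    (hne : ¬ ∀ i : ℕ, PowerSeries.coeff (R := MvPowerSeries (Fin n) K) i f ∈ M)
    (d : ℕ)
    (hd : PowerSeries.coeff (R := MvPowerSeries (Fin n) K) d f ∉ M)
    (hdmin : ∀ i < d, PowerSeries.coeff (R := MvPowerSeries (Fin n) K) i f ∈ M) :
    ∃! αp : (PowerSeries (MvPowerSeries (Fin n) K))ˣ × Polynomial (MvPowerSeries (Fin n) K),
      αp.2.Monic ∧ αp.2.natDegree = d ∧ (∀ i < d, αp.2.coeff i ∈ M) ∧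
      f = (αp.1 : PowerSeries (MvPowerSeries (Fin n) K)) *
        (αp.2 : PowerSeries (MvPowerSeries (Fin n) K)) := by
  classical
  subst hM
  -- hypotheses for the division theorem
  have htop : ∀ x : MvPowerSeries (Fin n) K, x ∈ Jd n K 0 := fun x e he => absurd he (Nat.not_lt_zero _)
  have hanti : ∀ k, Jd n K (k + 1) ≤ Jd n K k := fun k x hx e he => hx e (by omega)
  have hf1 : ∀ i < d, PowerSeries.coeff (R := MvPowerSeries (Fin n) K) i f ∈ Jd n K 1 :=
    fun i hi => span_le_Jd_one (hdmin i hi)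
  have hu : IsUnit (PowerSeries.coeff (R := MvPowerSeries (Fin n) K) d f) := by
    apply MvPowerSeries.isUnit_iff_constantCoeff.mpr
    apply isUnit_iff_ne_zero.mpr
    intro h0
    exact hd (mem_span_of_constantCoeff_eq_zero h0)
  obtain ⟨⟨q, r⟩, ⟨hrd, heq⟩, huniq⟩ :=
    division_exists_unique (Jd n K) htop hanti (fun {k l a b} ha hb => Jd_mul_mem ha hb)
      Jd_sep Jd_complete f d hf1 hu (PowerSeries.X ^ d)
  dsimp only at hrd heq huniq
  -- the remainder has coefficients in M
  have hrM : ∀ j < d, r.coeff j ∈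
      Ideal.span (Set.range (MvPowerSeries.X : Fin n → MvPowerSeries (Fin n) K)) := by
    intro j hj
    have h1 : r.coeff j = PowerSeries.coeff (R := MvPowerSeries (Fin n) K) j ((PowerSeries.X : PowerSeries (MvPowerSeries (Fin n) K)) ^ d)
        - PowerSeries.coeff (R := MvPowerSeries (Fin n) K) j (q * f) := by
      rw [← Polynomial.coeff_coe]
      have : (r : PowerSeries (MvPowerSeries (Fin n) K)) = (PowerSeries.X : PowerSeries (MvPowerSeries (Fin n) K)) ^ d - q * f := by
        linear_combination -heq
      rw [this, map_sub]
    rw [h1, PowerSeries.coeff_X_pow, if_neg (by omega), zero_sub]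
    apply neg_mem
    rw [PowerSeries.coeff_mul]
    refine Submodule.sum_mem _ ?_
    rintro ⟨a, b⟩ hab
    rw [Finset.HasAntidiagonal.mem_antidiagonal] at hab
    dsimp only
    exact Ideal.mul_mem_left _ _ (hdmin b (by omega))
  -- q is a unit
  set φ : PowerSeries (MvPowerSeries (Fin n) K) →+* PowerSeries K :=
    PowerSeries.map (MvPowerSeries.constantCoeff (σ := Fin n) (R := K)) with hφ
  have htr : trunc d (φ f) = 0 := by
    apply Polynomial.ext
    intro i
    rw [coeff_trunc, Polynomial.coeff_zero]
    split_ifs with hi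
    · rw [hφ, PowerSeries.coeff_map]
      exact mem_span_iff_constantCoeff.mp (hdmin i hi)
    · rfl
  have hφf : φ f = shiftd d (φ f) * PowerSeries.X ^ d := by
    conv_lhs => rw [eq_trunc_add_shiftd d (φ f)]
    rw [htr, Polynomial.coe_zero, zero_add]
  have hφr : φ (r : PowerSeries (MvPowerSeries (Fin n) K)) = 0 := by
    ext j
    rw [map_zero, hφ, PowerSeries.coeff_map, Polynomial.coeff_coe]
    by_cases hj : j < d
    · exact mem_span_iff_constantCoeff.mp (hrM j hj)
    · rw [Polynomial.coeff_eq_zero_of_degree_lt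
        (lt_of_lt_of_le hrd (by exact_mod_cast Nat.le_of_not_lt hj)), map_zero]
  have hE : (PowerSeries.X : PowerSeries K) ^ d =
      φ q * (shiftd d (φ f) * PowerSeries.X ^ d) := by
    have h2 := congrArg φ heq
    rw [map_add, map_mul, map_pow, PowerSeries.map_X, hφr, add_zero] at h2
    rw [hφf] at h2
    exact h2
  have hunit1 : φ q * shiftd d (φ f) = 1 := by
    have h3 : (1 - φ q * shiftd d (φ f)) * (PowerSeries.X : PowerSeries K) ^ d = 0 := by
      linear_combination hE
    rcases mul_eq_zero.mp h3 with h4 | h4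
    · linear_combination -h4
    · exact absurd h4 (pow_ne_zero _ PowerSeries.X_ne_zero)
  have hφq : IsUnit (φ q) := IsUnit.of_mul_eq_one _ hunit1
  have hql : IsUnit q := by
    apply PowerSeries.isUnit_iff_constantCoeff.mpr
    apply MvPowerSeries.isUnit_iff_constantCoeff.mpr
    have h1 := PowerSeries.isUnit_iff_constantCoeff.mp hφq
    rwa [← PowerSeries.coeff_zero_eq_constantCoeff_apply, hφ, PowerSeries.coeff_map,
      PowerSeries.coeff_zero_eq_constantCoeff_apply] at h1
  obtain ⟨u', hb⟩ := hql
  -- the distinguished polynomial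
  set p : Polynomial (MvPowerSeries (Fin n) K) := Polynomial.X ^ d - r with hp
  have hpdeg : p.degree = d := by
    rw [hp]
    rw [Polynomial.degree_sub_eq_left_of_degree_lt (by rwa [Polynomial.degree_X_pow]),
      Polynomial.degree_X_pow]
  have hpnat : p.natDegree = d := Polynomial.natDegree_eq_of_degree_eq_some hpdeg
  have hrd' : r.coeff d = 0 := Polynomial.coeff_eq_zero_of_degree_lt hrd
  have hpmon : p.Monic := by
    rw [Polynomial.Monic, Polynomial.leadingCoeff, hpnat, hp, Polynomial.coeff_sub,
      Polynomial.coeff_X_pow, if_pos rfl, hrd', sub_zero]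
  have hpcoef : ∀ i < d, p.coeff i ∈
      Ideal.span (Set.range (MvPowerSeries.X : Fin n → MvPowerSeries (Fin n) K)) := by
    intro i hi
    rw [hp, Polynomial.coeff_sub, Polynomial.coeff_X_pow, if_neg (by omega), zero_sub]
    exact neg_mem (hrM i hi)
  have hqf : q * f = (p : PowerSeries (MvPowerSeries (Fin n) K)) := by
    rw [hp]
    push_cast
    linear_combination -heq
  have hfp : f = ((u'⁻¹ : (PowerSeries (MvPowerSeries (Fin n) K))ˣ) : PowerSeries (MvPowerSeries (Fin n) K)) * (p : PowerSeries (MvPowerSeries (Fin n) K)) := by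
    rw [← hqf, ← hb, ← mul_assoc, ← Units.val_mul, inv_mul_cancel, Units.val_one, one_mul]
  refine ⟨(u'⁻¹, p), ⟨hpmon, hpnat, hpcoef, hfp⟩, ?_⟩
  rintro ⟨α', p'⟩ ⟨hmon', hdeg', hcoef', hfeq'⟩
  dsimp only at hmon' hdeg' hcoef' hfeq' ⊢
  have hp'ne : p' ≠ 0 := hmon'.ne_zero
  have hp'deg : p'.degree = d := by
    rw [Polynomial.degree_eq_natDegree hp'ne, hdeg']
  have hinvf : ((α'⁻¹ : (PowerSeries (MvPowerSeries (Fin n) K))ˣ) : PowerSeries (MvPowerSeries (Fin n) K)) * f = (p' : PowerSeries (MvPowerSeries (Fin n) K)) := by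
    rw [hfeq', ← mul_assoc, ← Units.val_mul, inv_mul_cancel, Units.val_one, one_mul]
  have hdiv2 : (PowerSeries.X : PowerSeries (MvPowerSeries (Fin n) K)) ^ d =
      ((α'⁻¹ : (PowerSeries (MvPowerSeries (Fin n) K))ˣ) : PowerSeries (MvPowerSeries (Fin n) K)) * f + ((Polynomial.X ^ d - p' : Polynomial (MvPowerSeries (Fin n) K)) : PowerSeries (MvPowerSeries (Fin n) K)) := by
    push_cast
    rw [hinvf]
    ring
  have hdeg2 : (Polynomial.X ^ d - p' : Polynomial (MvPowerSeries (Fin n) K)).degree < d := by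
    have h5 : (Polynomial.X ^ d - p' : Polynomial (MvPowerSeries (Fin n) K)).degree <
        (Polynomial.X ^ d : Polynomial (MvPowerSeries (Fin n) K)).degree := by
      apply Polynomial.degree_sub_lt
      · rw [Polynomial.degree_X_pow, hp'deg]
      · exact pow_ne_zero _ Polynomial.X_ne_zero
      · rw [(Polynomial.monic_X_pow d).leadingCoeff, hmon'.leadingCoeff]
    rwa [Polynomial.degree_X_pow] at h5
  have h6 := huniq (((α'⁻¹ : (PowerSeries (MvPowerSeries (Fin n) K))ˣ) : PowerSeries (MvPowerSeries (Fin n) K)), Polynomial.X ^ d - p')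
    ⟨hdeg2, hdiv2⟩
  rw [Prod.mk.injEq] at h6
  obtain ⟨h7, h8⟩ := h6
  have hα : α' = u'⁻¹ := by
    have h9 : α'⁻¹ = u' := Units.ext (h7.trans hb.symm)
    rw [← inv_inv α', h9]
  have hp2 : p' = p := by
    rw [hp]
    linear_combination -h8
  rw [hα, hp2]
end

section
/- In the setting of the Weierstrass Preparation Theorem, if moreover f is a polynomial in X_{n+1} of degree d+m over A = K[[X_1,...,X_n]], then the unit factor α is a polynomial in X_{n+1} of degree m over A. -/
open MvPowerSeries in
/-- Elements of the `k`-th power of the maximal ideal have vanishing coefficients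
in total degree `< k`. -/
lemma weier_aux_pow_coeff (n : ℕ) (K : Type*) [Field K]
    (M : Ideal (MvPowerSeries (Fin n) K))
    (hM : M = Ideal.span (Set.range (MvPowerSeries.X : Fin n → MvPowerSeries (Fin n) K))) :
    ∀ k : ℕ, ∀ a ∈ M ^ k, ∀ e : Fin n →₀ ℕ, (∑ i, e i) < k →
      MvPowerSeries.coeff e a = 0 := by
  have hconst : ∀ x ∈ M, MvPowerSeries.constantCoeff (σ := Fin n) (R := K) x = 0 := by
    intro x hx
    have : M ≤ RingHom.ker (MvPowerSeries.constantCoeff (σ := Fin n) (R := K)) := by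
      rw [hM, Ideal.span_le]
      rintro _ ⟨i, rfl⟩
      simp [RingHom.mem_ker]
    simpa [RingHom.mem_ker] using this hx
  intro k
  induction k with
  | zero => intro a _ e he; omega
  | succ k ih =>
    intro a ha e he
    rw [pow_succ] at ha
    refine Submodule.mul_induction_on ha (fun x hx y hy => ?_) (fun x y hx hy => ?_)
    · 
      rw [MvPowerSeries.coeff_mul]
      apply Finset.sum_eq_zero
      rintro ⟨u, v⟩ huv
      rw [Finset.HasAntidiagonal.mem_antidiagonal] at huv
      by_cases hv : v = 0
      · have : MvPowerSeries.coeff v y = 0 := by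
          rw [hv]; exact hconst y hy
        simp [this]
      · have hv1 : 1 ≤ ∑ i, v i := by
          by_contra h
          push_neg at h
          apply hv
          ext i
          have := Finset.sum_eq_zero_iff (s := (Finset.univ : Finset (Fin n)))
            (f := fun i => v i)
          simp only [Nat.lt_one_iff] at h
          rw [h] at this
          simpa using (this.mp rfl) i
        have hsum : (∑ i, u i) + (∑ i, v i) = ∑ i, e i := by
          rw [← Finset.sum_add_distrib]
          exact Finset.sum_congr rfl fun i _ => by
            rw [← huv]; rfl
        have : (∑ i, u i) < k := by omega
        rw [ih x hx u this, zero_mul]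
    · rw [map_add, hx, hy, add_zero]

/-- If all coefficients of `a` lie in every power of the maximal ideal, then `a = 0`. -/
lemma weier_aux_inter (n : ℕ) (K : Type*) [Field K]
    (M : Ideal (MvPowerSeries (Fin n) K))
    (hM : M = Ideal.span (Set.range (MvPowerSeries.X : Fin n → MvPowerSeries (Fin n) K)))
    (a : MvPowerSeries (Fin n) K) (ha : ∀ k : ℕ, a ∈ M ^ k) : a = 0 := by
  ext e
  rw [map_zero]
  exact weier_aux_pow_coeff n K M hM ((∑ i, e i) + 1) a (ha _) e (by omega)

/-- Uniqueness part of Weierstrass division: if `s * p = r` with `r` a polynomial of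
degree `< d` and `p` a Weierstrass polynomial of degree `d`, then `s = 0`. -/
lemma weier_aux_unique (n : ℕ) (K : Type*) [Field K]
    (M : Ideal (MvPowerSeries (Fin n) K))
    (hM : M = Ideal.span (Set.range (MvPowerSeries.X : Fin n → MvPowerSeries (Fin n) K)))
    (d : ℕ) (p r : Polynomial (MvPowerSeries (Fin n) K))
    (s : PowerSeries (MvPowerSeries (Fin n) K))
    (hp : p.Monic) (hpd : p.natDegree = d) (hpM : ∀ i < d, p.coeff i ∈ M)
    (hr : r.degree < (d : WithBot ℕ))
    (hsp : s * (p : PowerSeries (MvPowerSeries (Fin n) K)) =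
      (r : PowerSeries (MvPowerSeries (Fin n) K))) : s = 0 := by
  have key : ∀ k : ℕ, ∀ j : ℕ, PowerSeries.coeff j s ∈ M ^ k := by
    intro k
    induction k with
    | zero => intro j; simp
    | succ k ih =>
      intro j
      have hc := congrArg (PowerSeries.coeff (j + d)) hsp
      rw [PowerSeries.coeff_mul, Polynomial.coeff_coe] at hc
      have hr0 : r.coeff (j + d) = 0 := by
        apply Polynomial.coeff_eq_zero_of_degree_lt
        refine lt_of_lt_of_le hr ?_
        exact_mod_cast Nat.le_add_left d j
      rw [hr0] at hc
      have hmem : ((j, d) : ℕ × ℕ) ∈ Finset.HasAntidiagonal.antidiagonal (j + d) := by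
        rw [Finset.HasAntidiagonal.mem_antidiagonal]
      have hsplit := Finset.sum_erase_add (Finset.HasAntidiagonal.antidiagonal (j + d))
        (fun q => PowerSeries.coeff q.1 s * PowerSeries.coeff q.2 (p : PowerSeries (MvPowerSeries (Fin n) K))) hmem
      rw [hc] at hsplit
      have hpdc : PowerSeries.coeff d (p : PowerSeries (MvPowerSeries (Fin n) K)) = 1 := by
        rw [Polynomial.coeff_coe, ← hpd]
        exact hp.coeff_natDegree
      have hj : PowerSeries.coeff j s =
          -∑ q ∈ (Finset.HasAntidiagonal.antidiagonal (j + d)).erase (j, d),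
            PowerSeries.coeff q.1 s * PowerSeries.coeff q.2 (p : PowerSeries (MvPowerSeries (Fin n) K)) := by
        have : PowerSeries.coeff j s * PowerSeries.coeff d (p : PowerSeries (MvPowerSeries (Fin n) K)) =
            PowerSeries.coeff j s := by rw [hpdc, mul_one]
        linear_combination hsplit - this
      rw [hj]
      apply neg_mem
      apply Ideal.sum_mem _
      rintro ⟨i, l⟩ hq
      rw [Finset.mem_erase, Finset.HasAntidiagonal.mem_antidiagonal] at hq
      obtain ⟨hne, hil⟩ := hq
      simp only [Polynomial.coeff_coe]
      rcases lt_trichotomy l d with hl | hl | hl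
      · rw [pow_succ]
        exact Ideal.mul_mem_mul (ih i) (hpM l hl)
      · exact absurd (by simp [hl, show i = j by omega]) hne
      · rw [Polynomial.coeff_eq_zero_of_natDegree_lt (by omega), mul_zero]
        exact Ideal.zero_mem _
  refine PowerSeries.ext fun j => ?_
  rw [map_zero]
  exact weier_aux_inter n K M hM _ (fun k => key k j)

/-- In the setting of Weierstrass preparation, if f is a polynomial of degree d + m
over A = K[[X_1,...,X_n]], then the unit α is a polynomial of degree m over A. -/
theorem weierstrass_unit_is_polynomial (n : ℕ) (K : Type*) [Field K]
    (M : Ideal (MvPowerSeries (Fin n) K))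
    (hM : M = Ideal.span (Set.range (MvPowerSeries.X : Fin n → MvPowerSeries (Fin n) K)))
    (d m : ℕ) (f p : Polynomial (MvPowerSeries (Fin n) K))
    (α : (PowerSeries (MvPowerSeries (Fin n) K))ˣ)
    (hf0 : f ≠ 0) (hfd : f.natDegree = d + m)
    (hd : f.coeff d ∉ M) (hdmin : ∀ i < d, f.coeff i ∈ M)
    (hp : p.Monic) (hpd : p.natDegree = d) (hpM : ∀ i < d, p.coeff i ∈ M)
    (heq : (f : PowerSeries (MvPowerSeries (Fin n) K)) =
      (α : PowerSeries (MvPowerSeries (Fin n) K)) *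
        (p : PowerSeries (MvPowerSeries (Fin n) K))) :
    ∃ q : Polynomial (MvPowerSeries (Fin n) K),
      (q : PowerSeries (MvPowerSeries (Fin n) K)) =
        (α : PowerSeries (MvPowerSeries (Fin n) K)) ∧ q.natDegree = m := by
  set q := f /ₘ p with hq
  set r := f %ₘ p with hrdef
  have hdiv : r + p * q = f := Polynomial.modByMonic_add_div f p
  have hrd : r.degree < (d : WithBot ℕ) := by
    have := Polynomial.degree_modByMonic_lt f hp
    rwa [Polynomial.degree_eq_natDegree hp.ne_zero, hpd] at this
  set s : PowerSeries (MvPowerSeries (Fin n) K) :=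
    (α : PowerSeries (MvPowerSeries (Fin n) K)) - (q : PowerSeries (MvPowerSeries (Fin n) K))
    with hs
  have hsp : s * (p : PowerSeries (MvPowerSeries (Fin n) K)) =
      (r : PowerSeries (MvPowerSeries (Fin n) K)) := by
    have hcoe : (r : PowerSeries (MvPowerSeries (Fin n) K)) +
        (p : PowerSeries _) * (q : PowerSeries _) = (f : PowerSeries _) := by
      rw [← Polynomial.coe_mul, ← Polynomial.coe_add, hdiv]
    rw [hs, sub_mul, ← heq, ← hcoe]
    ring
  have hs0 : s = 0 := weier_aux_unique n K M hM d p r s hp hpd hpM hrd hsp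
  have hαq : (q : PowerSeries (MvPowerSeries (Fin n) K)) =
      (α : PowerSeries (MvPowerSeries (Fin n) K)) := by
    have := sub_eq_zero.mp (hs ▸ hs0)
    exact this.symm
  have hr0 : r = 0 := by
    rw [← Polynomial.coe_eq_zero_iff, ← hsp, hs0, zero_mul]
  have hfpq : f = p * q := by rw [← hdiv, hr0, zero_add]
  have hqne : q ≠ 0 := by
    intro h
    apply hf0
    rw [hfpq, h, mul_zero]
  refine ⟨q, hαq, ?_⟩
  have := Polynomial.Monic.natDegree_mul' hp hqne
  rw [← hfpq, hfd, hpd] at this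
  omega
end

section
/- Hensel's Lemma for power series: Let K be an algebraically closed field, A = K[[X_1,...,X_n]], and let f ∈ A[X_{n+1}] be monic of degree k. Write f̄ = f(0,...,0,X_{n+1}) ∈ K[X_{n+1}] and factor f̄ = Π_{j=1}^r (X_{n+1} − c_j)^{k_j} with pairwise distinct c_j ∈ K. Then there exist monic polynomials f_1,...,f_r ∈ A[X_{n+1}] such that f = f_1⋯f_r, deg f_j = k_j, and f̄_j = (X_{n+1} − c_j)^{k_j} for each j. -/
open Polynomial

noncomputable section HenselAux

variable {σ : Type*} {K : Type*} [Field K]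

/-- total degree of a monomial exponent -/
def hdegd (d : σ →₀ ℕ) : ℕ := d.sum fun _ m => m

lemma hdegd_add (a b : σ →₀ ℕ) : hdegd (a + b) = hdegd a + hdegd b := by
  classical
  exact Finsupp.sum_add_index' (fun _ => rfl) (fun _ _ _ => rfl)

lemma hdegd_zero : hdegd (0 : σ →₀ ℕ) = 0 := by simp [hdegd]

lemma hdegd_eq_zero {d : σ →₀ ℕ} (h : hdegd d = 0) : d = 0 := by
  classical
  ext a
  simp only [Finsupp.coe_zero, Pi.zero_apply]
  by_contra ha
  have hmem : a ∈ d.support := Finsupp.mem_support_iff.2 ha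
  have : d a ≤ hdegd d := Finset.single_le_sum (f := fun x => d x) (fun _ _ => Nat.zero_le _) hmem
  omega

/-- the ideal of power series whose coefficients vanish in total degrees `< t` -/
def wI (K : Type*) [Field K] (σ : Type*) (t : ℕ) : Ideal (MvPowerSeries σ K) where
  carrier := {x | ∀ d : σ →₀ ℕ, hdegd d < t → MvPowerSeries.coeff (R := K) d x = 0}
  add_mem' := fun hx hy d hd => by simp [map_add, hx d hd, hy d hd]
  zero_mem' := fun d _ => by simp
  smul_mem' := fun c x hx d hd => by
    classical
    rw [smul_eq_mul, MvPowerSeries.coeff_mul]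
    refine Finset.sum_eq_zero fun p hp => ?_
    rw [Finset.HasAntidiagonal.mem_antidiagonal] at hp
    have h2 : hdegd p.2 < t := by
      have := hdegd_add p.1 p.2
      rw [hp] at this; omega
    rw [hx p.2 h2, mul_zero]

lemma wI_antitone {t t' : ℕ} (h : t ≤ t') {x : MvPowerSeries σ K} (hx : x ∈ wI K σ t') :
    x ∈ wI K σ t := fun d hd => hx d (lt_of_lt_of_le hd h)

lemma mul_mem_wI {s t : ℕ} {x y : MvPowerSeries σ K} (hx : x ∈ wI K σ s) (hy : y ∈ wI K σ t) :
    x * y ∈ wI K σ (s + t) := by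
  classical
  intro d hd
  rw [MvPowerSeries.coeff_mul]
  refine Finset.sum_eq_zero fun p hp => ?_
  rw [Finset.HasAntidiagonal.mem_antidiagonal] at hp
  have hsum : hdegd p.1 + hdegd p.2 = hdegd d := by rw [← hdegd_add, hp]
  rcases lt_or_ge (hdegd p.1) s with h1 | h1
  · rw [hx p.1 h1, zero_mul]
  · rw [hy p.2 (by omega), mul_zero]

lemma mem_wI_one_iff {x : MvPowerSeries σ K} :
    x ∈ wI K σ 1 ↔ MvPowerSeries.constantCoeff (σ := σ) (R := K) x = 0 := by
  constructor
  · intro h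
    rw [← MvPowerSeries.coeff_zero_eq_constantCoeff_apply]
    exact h 0 (by simp [hdegd_zero])
  · intro h d hd
    have : d = 0 := hdegd_eq_zero (by omega)
    rw [this, MvPowerSeries.coeff_zero_eq_constantCoeff_apply, h]


variable (σ K) in
lemma coeff_mul_mem_wI {s t : ℕ} {p q : Polynomial (MvPowerSeries σ K)}
    (hp : ∀ i, p.coeff i ∈ wI K σ s) (hq : ∀ i, q.coeff i ∈ wI K σ t) :
    ∀ i, (p * q).coeff i ∈ wI K σ (s + t) := by
  intro i
  rw [Polynomial.coeff_mul]
  exact Ideal.sum_mem _ fun x _ => mul_mem_wI (hp _) (hq _)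

variable (σ K) in
lemma pw_iff_map (t : ℕ) (p : Polynomial (MvPowerSeries σ K)) :
    p.map (Ideal.Quotient.mk (wI K σ t)) = 0 ↔ ∀ i, p.coeff i ∈ wI K σ t := by
  rw [Polynomial.ext_iff]
  refine forall_congr' fun i => ?_
  rw [Polynomial.coeff_map, Polynomial.coeff_zero, Ideal.Quotient.eq_zero_iff_mem]


variable (σ K) in
/-- the invariant for the Hensel iteration -/
def HInv (f : Polynomial (MvPowerSeries σ K)) (g₀ h₀ : Polynomial K) (t : ℕ)
    (p : Polynomial (MvPowerSeries σ K) × Polynomial (MvPowerSeries σ K)) : Prop :=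
  p.1.Monic ∧ p.2.Monic ∧
  p.1.map (MvPowerSeries.constantCoeff (σ := σ) (R := K)) = g₀ ∧
  p.2.map (MvPowerSeries.constantCoeff (σ := σ) (R := K)) = h₀ ∧
  ∀ i, (f - p.1 * p.2).coeff i ∈ wI K σ t

lemma constCoeff_comp_C :
    (MvPowerSeries.constantCoeff (σ := σ) (R := K)).comp (MvPowerSeries.C (σ := σ) (R := K)) = RingHom.id K := by
  ext x
  simp

lemma map_constCoeff_map_C (g : Polynomial K) :
    (g.map (MvPowerSeries.C (σ := σ) (R := K))).map (MvPowerSeries.constantCoeff (σ := σ) (R := K)) = g := by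
  rw [Polynomial.map_map, constCoeff_comp_C, Polynomial.map_id]

lemma map_phi_eq_zero_of_wI {t : ℕ} (ht : 1 ≤ t) {a : Polynomial (MvPowerSeries σ K)}
    (ha : ∀ i, a.coeff i ∈ wI K σ t) :
    a.map (MvPowerSeries.constantCoeff (σ := σ) (R := K)) = 0 := by
  ext i
  rw [Polynomial.coeff_map, Polynomial.coeff_zero]
  exact mem_wI_one_iff.1 (wI_antitone ht (ha i))

lemma hbase {f : Polynomial (MvPowerSeries σ K)} {g₀ h₀ : Polynomial K}
    (hg₀ : g₀.Monic) (hh₀ : h₀.Monic)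
    (hbar : f.map (MvPowerSeries.constantCoeff (σ := σ) (R := K)) = g₀ * h₀) :
    HInv σ K f g₀ h₀ 1 (g₀.map (MvPowerSeries.C (σ := σ) (R := K)), h₀.map (MvPowerSeries.C (σ := σ) (R := K))) := by
  refine ⟨hg₀.map _, hh₀.map _, map_constCoeff_map_C g₀, map_constCoeff_map_C h₀, fun i => ?_⟩
  rw [mem_wI_one_iff]
  have : ((f - g₀.map (MvPowerSeries.C (σ := σ) (R := K)) * h₀.map (MvPowerSeries.C (σ := σ) (R := K))).map
      (MvPowerSeries.constantCoeff (σ := σ) (R := K))).coeff i = 0 := by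
    rw [Polynomial.map_sub, Polynomial.map_mul, map_constCoeff_map_C, map_constCoeff_map_C,
      hbar, sub_self, Polynomial.coeff_zero]
  rwa [Polynomial.coeff_map] at this

lemma hstep {f : Polynomial (MvPowerSeries σ K)} {g₀ h₀ : Polynomial K}
    (hf : f.Monic) (hg₀ : g₀.Monic) (hh₀ : h₀.Monic)
    (hcop : IsCoprime g₀ h₀)
    (hbar : f.map (MvPowerSeries.constantCoeff (σ := σ) (R := K)) = g₀ * h₀)
    (t : ℕ) (p : Polynomial (MvPowerSeries σ K) × Polynomial (MvPowerSeries σ K))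
    (hp : HInv σ K f g₀ h₀ (t + 1) p) :
    ∃ p', HInv σ K f g₀ h₀ (t + 2) p' ∧
      (∀ i, (p'.1 - p.1).coeff i ∈ wI K σ (t + 1)) ∧
      (∀ i, (p'.2 - p.2).coeff i ∈ wI K σ (t + 1)) := by
  classical
  set φ := MvPowerSeries.constantCoeff (σ := σ) (R := K)
  set ρ := MvPowerSeries.C (σ := σ) (R := K)
  obtain ⟨hgm, hhm, hgb, hhb, herr⟩ := hp
  set gl : Polynomial (MvPowerSeries σ K) := g₀.map ρ with hgl_def
  set hl : Polynomial (MvPowerSeries σ K) := h₀.map ρ with hhl_def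
  have hglm : gl.Monic := hg₀.map ρ
  have hhlm : hl.Monic := hh₀.map ρ
  obtain ⟨u, v, huv⟩ := hcop.map (Polynomial.mapRingHom ρ)
  rw [Polynomial.coe_mapRingHom] at huv
  set e : Polynomial (MvPowerSeries σ K) := f - p.1 * p.2 with he_def
  set a : Polynomial (MvPowerSeries σ K) := (v * e) %ₘ gl with ha_def
  set q : Polynomial (MvPowerSeries σ K) := (v * e) /ₘ gl with hq_def
  set b : Polynomial (MvPowerSeries σ K) := e * u + hl * q with hb_def
  have hvq : a + gl * q = v * e := modByMonic_add_div (v * e) gl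
  have hmain : gl * b + hl * a = e := by
    rw [hb_def]
    linear_combination e * huv + hl * hvq
  set π := Ideal.Quotient.mk (wI K σ (t + 1))
  have hemap : e.map π = 0 := (pw_iff_map σ K _ _).2 herr
  have hamap : a.map π = 0 := by
    rw [ha_def, Polynomial.map_modByMonic _ hglm, Polynomial.map_mul, hemap, mul_zero,
      zero_modByMonic]
  have hqmap : q.map π = 0 := by
    rw [hq_def, Polynomial.map_divByMonic _ hglm, Polynomial.map_mul, hemap, mul_zero,
      zero_divByMonic]
  have hbmap : b.map π = 0 := by
    rw [hb_def, Polynomial.map_add, Polynomial.map_mul, Polynomial.map_mul, hemap, hqmap,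
      zero_mul, mul_zero, add_zero]
  have hamem : ∀ i, a.coeff i ∈ wI K σ (t + 1) := (pw_iff_map σ K _ _).1 hamap
  have hbmem : ∀ i, b.coeff i ∈ wI K σ (t + 1) := (pw_iff_map σ K _ _).1 hbmap
  -- degree bookkeeping
  have hgld : gl.degree = g₀.degree := hg₀.degree_map ρ
  have hhld : hl.degree = h₀.degree := hh₀.degree_map ρ
  have hgd : p.1.degree = g₀.degree := by rw [← hgb]; exact (hgm.degree_map φ).symm
  have hhd : p.2.degree = h₀.degree := by rw [← hhb]; exact (hhm.degree_map φ).symm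
  have hfd : f.degree = g₀.degree + h₀.degree := by
    rw [← hf.degree_map φ, hbar, hh₀.degree_mul]
  have hadeg : a.degree < g₀.degree := by
    rw [← hgld]; exact degree_modByMonic_lt _ hglm
  have hg0bot : g₀.degree ≠ ⊥ := by
    simpa [Polynomial.degree_eq_bot] using hg₀.ne_zero
  have hh0bot : h₀.degree ≠ ⊥ := by
    simpa [Polynomial.degree_eq_bot] using hh₀.ne_zero
  have hedeg : e.degree < f.degree := by
    refine Polynomial.degree_sub_lt ?_ hf.ne_zero ?_
    · rw [hhm.degree_mul, hgd, hhd, hfd]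
    · rw [hf.leadingCoeff, (hgm.mul hhm).leadingCoeff]
  have hhla : (hl * a).degree < f.degree := by
    calc (hl * a).degree ≤ hl.degree + a.degree := Polynomial.degree_mul_le _ _
      _ < hl.degree + g₀.degree := by
          exact WithBot.add_lt_add_left (by rw [hhld]; exact hh0bot) hadeg
      _ = f.degree := by rw [hhld, hfd, add_comm]
  have hglb_eq : gl * b = e - hl * a := by linear_combination hmain
  have hglbd : (gl * b).degree < f.degree := by
    rw [hglb_eq]
    exact lt_of_le_of_lt (Polynomial.degree_sub_le _ _) (max_lt hedeg hhla)
  have hbdeg : b.degree < h₀.degree := by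
    have h1 : b.degree + gl.degree < h₀.degree + gl.degree := by
      rw [← hglm.degree_mul, mul_comm b gl]
      calc (gl * b).degree < f.degree := hglbd
        _ = h₀.degree + gl.degree := by rw [hgld, hfd, add_comm]
    exact (WithBot.add_lt_add_iff_right (by rw [hgld]; exact hg0bot)).1 h1
  refine ⟨(p.1 + a, p.2 + b), ⟨?_, ?_, ?_, ?_, ?_⟩, ?_, ?_⟩
  · exact hgm.add_of_left (by rw [hgd]; exact hadeg)
  · exact hhm.add_of_left (by rw [hhd]; exact hbdeg)
  · rw [Polynomial.map_add, hgb, map_phi_eq_zero_of_wI (by omega) hamem, add_zero]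
  · rw [Polynomial.map_add, hhb, map_phi_eq_zero_of_wI (by omega) hbmem, add_zero]
  · intro i
    have hre : f - (p.1 + a) * (p.2 + b) = (gl - p.1) * b + (hl - p.2) * a - a * b := by
      linear_combination -hmain
    rw [hre]
    have hgl1 : ∀ j, (gl - p.1).coeff j ∈ wI K σ 1 := by
      intro j
      rw [mem_wI_one_iff]
      have : ((gl - p.1).map φ).coeff j = 0 := by
        rw [Polynomial.map_sub, map_constCoeff_map_C, hgb, sub_self, Polynomial.coeff_zero]
      rwa [Polynomial.coeff_map] at this
    have hhl1 : ∀ j, (hl - p.2).coeff j ∈ wI K σ 1 := by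
      intro j
      rw [mem_wI_one_iff]
      have : ((hl - p.2).map φ).coeff j = 0 := by
        rw [Polynomial.map_sub, map_constCoeff_map_C, hhb, sub_self, Polynomial.coeff_zero]
      rwa [Polynomial.coeff_map] at this
    rw [Polynomial.coeff_sub, Polynomial.coeff_add]
    refine Ideal.sub_mem _ (Ideal.add_mem _ ?_ ?_) ?_
    · exact wI_antitone (by omega) (coeff_mul_mem_wI σ K hgl1 hbmem i)
    · exact wI_antitone (by omega) (coeff_mul_mem_wI σ K hhl1 hamem i)
    · exact wI_antitone (by omega) (coeff_mul_mem_wI σ K hamem hbmem i)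
  · intro i; simpa using hamem i
  · intro i; simpa using hbmem i


lemma mem_wI_iff {t : ℕ} {x : MvPowerSeries σ K} :
    x ∈ wI K σ t ↔ ∀ d : σ →₀ ℕ, hdegd d < t → MvPowerSeries.coeff (R := K) d x = 0 := Iff.rfl

lemma mem_wI_zero (x : MvPowerSeries σ K) : x ∈ wI K σ 0 :=
  fun _ hd => absurd hd (Nat.not_lt_zero _)

section Seq

variable {f : Polynomial (MvPowerSeries σ K)} {g₀ h₀ : Polynomial K}
  (hf : f.Monic) (hg₀ : g₀.Monic) (hh₀ : h₀.Monic)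
  (hcop : IsCoprime g₀ h₀)
  (hbar : f.map (MvPowerSeries.constantCoeff (σ := σ) (R := K)) = g₀ * h₀)

/-- the Hensel approximation sequence -/
noncomputable def hseqAux : ∀ t : ℕ,
    {p : Polynomial (MvPowerSeries σ K) × Polynomial (MvPowerSeries σ K) //
      HInv σ K f g₀ h₀ (t + 1) p} :=
  fun t => Nat.rec
    ⟨_, hbase hg₀ hh₀ hbar⟩
    (fun t x => ⟨(hstep hf hg₀ hh₀ hcop hbar t x.1 x.2).choose,
                 (hstep hf hg₀ hh₀ hcop hbar t x.1 x.2).choose_spec.1⟩) t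

lemma hseqAux_zero : (hseqAux hf hg₀ hh₀ hcop hbar 0).1 =
    (g₀.map (MvPowerSeries.C (σ := σ) (R := K)), h₀.map (MvPowerSeries.C (σ := σ) (R := K))) := rfl

lemma hseqAux_incr (t : ℕ) :
    (∀ i, ((hseqAux hf hg₀ hh₀ hcop hbar (t + 1)).1.1 -
      (hseqAux hf hg₀ hh₀ hcop hbar t).1.1).coeff i ∈ wI K σ (t + 1)) ∧
    (∀ i, ((hseqAux hf hg₀ hh₀ hcop hbar (t + 1)).1.2 -
      (hseqAux hf hg₀ hh₀ hcop hbar t).1.2).coeff i ∈ wI K σ (t + 1)) := by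
  have h := (hstep hf hg₀ hh₀ hcop hbar t (hseqAux hf hg₀ hh₀ hcop hbar t).1
    (hseqAux hf hg₀ hh₀ hcop hbar t).2).choose_spec
  exact ⟨h.2.1, h.2.2⟩

lemma hseqAux_tele {t t' : ℕ} (h : t ≤ t') :
    (∀ i, ((hseqAux hf hg₀ hh₀ hcop hbar t').1.1 -
      (hseqAux hf hg₀ hh₀ hcop hbar t).1.1).coeff i ∈ wI K σ (t + 1)) ∧
    (∀ i, ((hseqAux hf hg₀ hh₀ hcop hbar t').1.2 -
      (hseqAux hf hg₀ hh₀ hcop hbar t).1.2).coeff i ∈ wI K σ (t + 1)) := by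
  induction t' , h using Nat.le_induction with
  | base => exact ⟨fun i => by simpa using Ideal.zero_mem _,
      fun i => by simpa using Ideal.zero_mem _⟩
  | succ t' ht' ih =>
    obtain ⟨ih1, ih2⟩ := ih
    obtain ⟨j1, j2⟩ := hseqAux_incr hf hg₀ hh₀ hcop hbar t'
    constructor
    · intro i
      have := Ideal.add_mem _ (wI_antitone (by omega) (j1 i)) (ih1 i)
      simpa [Polynomial.coeff_sub, Polynomial.coeff_add] using this
    · intro i
      have := Ideal.add_mem _ (wI_antitone (by omega) (j2 i)) (ih2 i)
      simpa [Polynomial.coeff_sub, Polynomial.coeff_add] using this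

end Seq

/-- limit of the `i`-th coefficients of a sequence of polynomials -/
noncomputable def limCoeff (gs : ℕ → Polynomial (MvPowerSeries σ K)) (i : ℕ) :
    MvPowerSeries σ K :=
  fun d => MvPowerSeries.coeff (R := K) d ((gs (hdegd d)).coeff i)

lemma coeff_limCoeff (gs : ℕ → Polynomial (MvPowerSeries σ K)) (i : ℕ) (d : σ →₀ ℕ) :
    MvPowerSeries.coeff (R := K) d (limCoeff gs i) =
      MvPowerSeries.coeff (R := K) d ((gs (hdegd d)).coeff i) := rfl

/-- the limit polynomial of degree `s` -/
noncomputable def limPoly (gs : ℕ → Polynomial (MvPowerSeries σ K)) (s : ℕ) :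
    Polynomial (MvPowerSeries σ K) :=
  ∑ i ∈ Finset.range (s + 1), Polynomial.C (limCoeff gs i) * Polynomial.X ^ i

lemma coeff_limPoly (gs : ℕ → Polynomial (MvPowerSeries σ K)) (s j : ℕ) :
    (limPoly gs s).coeff j = if j ≤ s then limCoeff gs j else 0 := by
  rw [limPoly, Polynomial.finset_sum_coeff]
  simp only [Polynomial.coeff_C_mul, Polynomial.coeff_X_pow, mul_ite, mul_one, mul_zero]
  simp only [eq_comm (a := j)]
  rw [Finset.sum_ite_eq' (Finset.range (s + 1)) j (fun i => limCoeff gs i)]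
  simp [Nat.lt_succ_iff]


lemma limPoly_spec (gs : ℕ → Polynomial (MvPowerSeries σ K)) (g₀ : Polynomial K)
    (hg₀ : g₀.Monic) (hmono : ∀ t, (gs t).Monic)
    (hb : ∀ t, (gs t).map (MvPowerSeries.constantCoeff (σ := σ) (R := K)) = g₀)
    (tele : ∀ t t', t ≤ t' → ∀ i, ((gs t') - (gs t)).coeff i ∈ wI K σ (t + 1)) :
    (limPoly gs g₀.natDegree).Monic ∧
    (limPoly gs g₀.natDegree).map (MvPowerSeries.constantCoeff (σ := σ) (R := K)) = g₀ ∧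
    (∀ t i, ((limPoly gs g₀.natDegree) - gs t).coeff i ∈ wI K σ (t + 1)) := by
  set φ := MvPowerSeries.constantCoeff (σ := σ) (R := K)
  set s := g₀.natDegree with hs
  set G := limPoly gs s with hG
  have hdeg : ∀ t, (gs t).natDegree = s := by
    intro t
    rw [hs, ← hb t, (hmono t).natDegree_map φ]
  have hcoeff_top : ∀ t, (gs t).coeff s = 1 := by
    intro t
    have := (hmono t).leadingCoeff
    rwa [Polynomial.leadingCoeff, hdeg t] at this
  have hcoeff_high : ∀ t j, s < j → (gs t).coeff j = 0 := fun t j hj =>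
    Polynomial.coeff_eq_zero_of_natDegree_lt (by rw [hdeg t]; exact hj)
  have hlim_top : limCoeff gs s = 1 := by
    ext d
    rw [coeff_limCoeff, hcoeff_top]
  have hGcoeff : ∀ j, G.coeff j = if j ≤ s then limCoeff gs j else 0 := coeff_limPoly gs s
  have hGmonic : G.Monic := by
    refine Polynomial.monic_of_natDegree_le_of_coeff_eq_one s ?_ ?_
    · rw [Polynomial.natDegree_le_iff_coeff_eq_zero]
      intro N hN
      rw [hGcoeff, if_neg (by omega)]
    · rw [hGcoeff, if_pos le_rfl, hlim_top]
  have happrox : ∀ t i, (G - gs t).coeff i ∈ wI K σ (t + 1) := by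
    intro t i
    rw [mem_wI_iff]
    intro d hd
    rw [Polynomial.coeff_sub, map_sub]
    rcases le_or_gt i s with hi | hi
    · rw [hGcoeff, if_pos hi, coeff_limCoeff]
      have hle : hdegd d ≤ t := by omega
      have := tele (hdegd d) t hle i
      rw [mem_wI_iff] at this
      have h0 := this d (by omega)
      rw [Polynomial.coeff_sub, map_sub, sub_eq_zero] at h0
      rw [sub_eq_zero]
      exact h0.symm
    · rw [hGcoeff, if_neg (by omega), hcoeff_high t i hi, map_zero, sub_self]
  refine ⟨hGmonic, ?_, happrox⟩
  ext j
  rw [Polynomial.coeff_map]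
  rcases le_or_gt j s with hj | hj
  · rw [hGcoeff, if_pos hj, ← MvPowerSeries.coeff_zero_eq_constantCoeff_apply,
      coeff_limCoeff, hdegd_zero, MvPowerSeries.coeff_zero_eq_constantCoeff_apply]
    have : ((gs 0).map φ).coeff j = g₀.coeff j := by rw [hb 0]
    rwa [Polynomial.coeff_map] at this
  · rw [hGcoeff, if_neg (by omega), map_zero,
      (Polynomial.coeff_eq_zero_of_natDegree_lt (by rw [← hs]; exact hj)).symm]


lemma hensel_pair {f : Polynomial (MvPowerSeries σ K)} {g₀ h₀ : Polynomial K}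
    (hf : f.Monic) (hg₀ : g₀.Monic) (hh₀ : h₀.Monic)
    (hcop : IsCoprime g₀ h₀)
    (hbar : f.map (MvPowerSeries.constantCoeff (σ := σ) (R := K)) = g₀ * h₀) :
    ∃ G H : Polynomial (MvPowerSeries σ K), G.Monic ∧ H.Monic ∧ f = G * H ∧
      G.map (MvPowerSeries.constantCoeff (σ := σ) (R := K)) = g₀ ∧
      H.map (MvPowerSeries.constantCoeff (σ := σ) (R := K)) = h₀ := by
  classical
  set φ := MvPowerSeries.constantCoeff (σ := σ) (R := K)
  set gs : ℕ → Polynomial (MvPowerSeries σ K) :=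
    fun t => (hseqAux hf hg₀ hh₀ hcop hbar t).1.1 with hgs
  set hs : ℕ → Polynomial (MvPowerSeries σ K) :=
    fun t => (hseqAux hf hg₀ hh₀ hcop hbar t).1.2 with hhs
  have hinv : ∀ t, HInv σ K f g₀ h₀ (t + 1) (gs t, hs t) :=
    fun t => (hseqAux hf hg₀ hh₀ hcop hbar t).2
  have tele1 : ∀ t t', t ≤ t' → ∀ i, ((gs t') - (gs t)).coeff i ∈ wI K σ (t + 1) :=
    fun t t' h => (hseqAux_tele hf hg₀ hh₀ hcop hbar h).1
  have tele2 : ∀ t t', t ≤ t' → ∀ i, ((hs t') - (hs t)).coeff i ∈ wI K σ (t + 1) :=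
    fun t t' h => (hseqAux_tele hf hg₀ hh₀ hcop hbar h).2
  obtain ⟨hGm, hGb, hGa⟩ := limPoly_spec gs g₀ hg₀ (fun t => (hinv t).1)
    (fun t => (hinv t).2.2.1) tele1
  obtain ⟨hHm, hHb, hHa⟩ := limPoly_spec hs h₀ hh₀ (fun t => (hinv t).2.1)
    (fun t => (hinv t).2.2.2.1) tele2
  set G := limPoly gs g₀.natDegree
  set H := limPoly hs h₀.natDegree
  refine ⟨G, H, hGm, hHm, ?_, hGb, hHb⟩
  rw [← sub_eq_zero]
  ext1 i
  rw [Polynomial.coeff_zero]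
  ext d
  rw [map_zero]
  set t := hdegd d with ht
  have hsplit : f - G * H = (f - gs t * hs t) - ((G - gs t) * H + gs t * (H - hs t)) := by
    ring
  have hmem : (f - G * H).coeff i ∈ wI K σ (t + 1) := by
    rw [hsplit, Polynomial.coeff_sub, Polynomial.coeff_add]
    refine Ideal.sub_mem _ ((hinv t).2.2.2.2 i) (Ideal.add_mem _ ?_ ?_)
    · exact coeff_mul_mem_wI σ K (s := t + 1) (t := 0) (hGa t) (fun j => mem_wI_zero _) i
    · exact wI_antitone (by omega)
        (coeff_mul_mem_wI σ K (s := 0) (t := t + 1) (fun j => mem_wI_zero _) (hHa t) i)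
  exact hmem d (by omega)


lemma hensel_main (r : ℕ) :
    ∀ (f : Polynomial (MvPowerSeries σ K)), f.Monic →
    ∀ (c : Fin r → K), Function.Injective c →
    ∀ (mult : Fin r → ℕ),
    f.map (MvPowerSeries.constantCoeff (σ := σ) (R := K)) =
      ∏ j, (Polynomial.X - Polynomial.C (c j)) ^ mult j →
    ∃ F : Fin r → Polynomial (MvPowerSeries σ K),
      (∀ j, (F j).Monic) ∧ f = ∏ j, F j ∧
      (∀ j, (F j).map (MvPowerSeries.constantCoeff (σ := σ) (R := K)) =
        (Polynomial.X - Polynomial.C (c j)) ^ mult j) := by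
  induction r with
  | zero =>
    intro f hf c hc mult hbar
    refine ⟨fun j => j.elim0, fun j => j.elim0, ?_, fun j => j.elim0⟩
    rw [Finset.univ_eq_empty, Finset.prod_empty]
    have h1 : f.natDegree = 0 := by
      rw [← hf.natDegree_map (MvPowerSeries.constantCoeff (σ := σ) (R := K)), hbar,
        Finset.univ_eq_empty, Finset.prod_empty, Polynomial.natDegree_one]
    exact hf.natDegree_eq_zero.1 h1
  | succ r ih =>
    intro f hf c hc mult hbar
    set φ := MvPowerSeries.constantCoeff (σ := σ) (R := K)
    set g₀ : Polynomial K := (Polynomial.X - Polynomial.C (c 0)) ^ mult 0 with hg₀def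
    set h₀ : Polynomial K :=
      ∏ j : Fin r, (Polynomial.X - Polynomial.C (c j.succ)) ^ mult j.succ with hh₀def
    have hg₀ : g₀.Monic := (Polynomial.monic_X_sub_C _).pow _
    have hh₀ : h₀.Monic :=
      Polynomial.monic_prod_of_monic _ _ fun j _ => (Polynomial.monic_X_sub_C _).pow _
    have hcop : IsCoprime g₀ h₀ := by
      refine IsCoprime.prod_right fun j _ => ?_
      refine IsCoprime.pow ?_
      refine Polynomial.isCoprime_X_sub_C_of_isUnit_sub ?_
      have hne : c 0 ≠ c j.succ := fun h => by
        exact (Fin.succ_ne_zero j).symm (hc h)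
      exact (sub_ne_zero_of_ne hne).isUnit
    have hbar' : f.map φ = g₀ * h₀ := by
      rw [hbar, Fin.prod_univ_succ]
    obtain ⟨G, H, hGm, hHm, hfGH, hGb, hHb⟩ := hensel_pair hf hg₀ hh₀ hcop hbar'
    obtain ⟨F', hF'm, hHF', hF'b⟩ := ih H hHm (fun j => c j.succ)
      (fun j j' h => Fin.succ_injective r (hc h)) (fun j => mult j.succ) (by rw [hHb])
    refine ⟨Fin.cases G F', ?_, ?_, ?_⟩
    · intro j
      induction j using Fin.cases with
      | zero => simpa using hGm
      | succ j => simpa using hF'm j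
    · rw [Fin.prod_univ_succ]
      simpa using hfGH.trans (by rw [hHF'])
    · intro j
      induction j using Fin.cases with
      | zero => simpa using hGb
      | succ j => simpa using hF'b j

end HenselAux

/-- Hensel's Lemma: for K algebraically closed, A = K[[X_1,...,X_n]], and
f ∈ A[Y] monic of degree k with f̄ = Π_j (Y - c_j)^{k_j} for pairwise distinct c_j,
there exist monic f_j ∈ A[Y] with f = f_1⋯f_r, deg f_j = k_j, and
f̄_j = (Y - c_j)^{k_j}. -/
theorem hensel_factorization (n : ℕ) (K : Type*) [Field K] [IsAlgClosed K]
    (k r : ℕ) (f : Polynomial (MvPowerSeries (Fin n) K))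
    (hmonic : f.Monic) (hdeg : f.natDegree = k)
    (c : Fin r → K) (hc : Function.Injective c)
    (mult : Fin r → ℕ) (hmult : ∀ j, 0 < mult j)
    (hbar : f.map (MvPowerSeries.constantCoeff : MvPowerSeries (Fin n) K →+* K) =
      ∏ j, (Polynomial.X - Polynomial.C (c j)) ^ mult j) :
    ∃ F : Fin r → Polynomial (MvPowerSeries (Fin n) K),
      (∀ j, (F j).Monic) ∧
      f = ∏ j, F j ∧
      (∀ j, (F j).natDegree = mult j) ∧
      (∀ j, (F j).map (MvPowerSeries.constantCoeff : MvPowerSeries (Fin n) K →+* K) =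
        (Polynomial.X - Polynomial.C (c j)) ^ mult j) := by
  obtain ⟨F, hFm, hprod, hFb⟩ := hensel_main r f hmonic c hc mult hbar
  refine ⟨F, hFm, hprod, ?_, hFb⟩
  intro j
  rw [← (hFm j).natDegree_map (MvPowerSeries.constantCoeff : MvPowerSeries (Fin n) K →+* K), hFb j,
    Polynomial.natDegree_pow, Polynomial.natDegree_X_sub_C, mul_one]
end

section
/- Uniqueness in Weierstrass preparation: if f = α·p = α'·p' where α, α' are units of A[[X_{n+1}]] and p, p' ∈ A[X_{n+1}] are monic of degree d with all non-leading coefficients in M, then α = α' and p = p'. -/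
lemma wp_aux_pow_coeff (n : ℕ) (K : Type*) [Field K] :
    ∀ k : ℕ, ∀ g ∈ (Ideal.span (Set.range (MvPowerSeries.X : Fin n → MvPowerSeries (Fin n) K)))^k,
      ∀ e : Fin n →₀ ℕ, (e.sum fun _ v => v) < k → MvPowerSeries.coeff e g = 0 := by
  intro k
  induction k with
  | zero => intro g hg e he; omega
  | succ k ih =>
    intro g hg
    rw [pow_succ] at hg
    refine Submodule.mul_induction_on hg (fun m hm i hi e he => ?_) (fun x y hx hy e he => ?_)
    · rw [MvPowerSeries.coeff_mul]
      refine Finset.sum_eq_zero fun q hq => ?_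
      rw [Finset.HasAntidiagonal.mem_antidiagonal] at hq
      by_cases h1 : (q.1.sum fun _ v => v) < k
      · rw [ih m hm q.1 h1, zero_mul]
      · have hsum : (q.1.sum fun _ v => v) + (q.2.sum fun _ v => v) = e.sum fun _ v => v := by
          rw [← Finsupp.sum_add_index' (fun _ => rfl) (fun _ _ _ => rfl), hq]
        have h2 : (q.2.sum fun _ v => v) = 0 := by omega
        have hq2 : q.2 = 0 := by
          ext a
          by_contra hne
          simp only [Finsupp.coe_zero, Pi.zero_apply] at hne
          have : 0 < q.2.sum fun _ v => v := by
            refine Finset.sum_pos' (fun _ _ => Nat.zero_le _) ⟨a, Finsupp.mem_support_iff.mpr hne, ?_⟩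
            exact Nat.pos_of_ne_zero hne
          omega
        have : MvPowerSeries.coeff q.2 i = 0 := by
          rw [hq2]
          have hker : Ideal.span (Set.range (MvPowerSeries.X : Fin n → MvPowerSeries (Fin n) K))
              ≤ RingHom.ker (MvPowerSeries.constantCoeff (σ := Fin n) (R := K)) := by
            rw [Ideal.span_le]
            rintro _ ⟨j, rfl⟩
            simp [RingHom.mem_ker]
          simpa [MvPowerSeries.coeff_zero_eq_constantCoeff, RingHom.mem_ker] using hker hi
        rw [this, mul_zero]
    · rw [map_add, hx e he, hy e he, add_zero]

lemma wp_sep (n : ℕ) (K : Type*) [Field K] (c : MvPowerSeries (Fin n) K)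
    (h : ∀ k : ℕ, c ∈ (Ideal.span (Set.range (MvPowerSeries.X : Fin n → MvPowerSeries (Fin n) K)))^k) :
    c = 0 := by
  ext e
  rw [map_zero]
  exact wp_aux_pow_coeff n K ((e.sum fun _ v => v) + 1) c (h _) e (by omega)

/-- Uniqueness in Weierstrass preparation: if f = α·p = α'·p' with α, α' units of
A[[Y]] and p, p' ∈ A[Y] monic of degree d with non-leading coefficients in M,
then α = α' and p = p'. -/
theorem weierstrass_preparation_unique (n : ℕ) (K : Type*) [Field K]
    (M : Ideal (MvPowerSeries (Fin n) K))
    (hM : M = Ideal.span (Set.range (MvPowerSeries.X : Fin n → MvPowerSeries (Fin n) K)))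
    (f : PowerSeries (MvPowerSeries (Fin n) K))
    (hne : ¬ ∀ i : ℕ, PowerSeries.coeff i f ∈ M)
    (d : ℕ)
    (hd : IsUnit (PowerSeries.coeff d f))
    (hdmin : ∀ i < d, ¬ IsUnit (PowerSeries.coeff i f))
    (α α' : (PowerSeries (MvPowerSeries (Fin n) K))ˣ)
    (p p' : Polynomial (MvPowerSeries (Fin n) K))
    (hp : p.Monic) (hpd : p.natDegree = d) (hpM : ∀ i < d, p.coeff i ∈ M)
    (hp' : p'.Monic) (hpd' : p'.natDegree = d) (hpM' : ∀ i < d, p'.coeff i ∈ M)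
    (heq : f = (α : PowerSeries (MvPowerSeries (Fin n) K)) *
      (p : PowerSeries (MvPowerSeries (Fin n) K)))
    (heq' : f = (α' : PowerSeries (MvPowerSeries (Fin n) K)) *
      (p' : PowerSeries (MvPowerSeries (Fin n) K))) :
    α = α' ∧ p = p' := by
  set A := MvPowerSeries (Fin n) K
  set u : (PowerSeries A)ˣ := α'⁻¹ * α with hu
  have h1 : (α : PowerSeries A) * p = (α' : PowerSeries A) * p' := by rw [← heq, ← heq']
  have hup : (u : PowerSeries A) * (p : PowerSeries A) = (p' : PowerSeries A) := by
    rw [hu, Units.val_mul, mul_assoc, h1, ← mul_assoc]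
    simp
  set w : PowerSeries A := (u : PowerSeries A) - 1 with hw
  have hwp : w * (p : PowerSeries A) = (p' : PowerSeries A) - (p : PowerSeries A) := by
    rw [hw, sub_mul, one_mul, hup]
  -- degree bound on p' - p
  have hpne : p' ≠ 0 := hp'.ne_zero
  have hdp' : p'.degree = (d : WithBot ℕ) := by
    rw [Polynomial.degree_eq_natDegree hpne, hpd']
  have hdp : p.degree = (d : WithBot ℕ) := by
    rw [Polynomial.degree_eq_natDegree hp.ne_zero, hpd]
  have hdeg : (p' - p).degree < (d : WithBot ℕ) := by
    have := Polynomial.degree_sub_lt (hdp'.trans hdp.symm) hpne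
      (hp'.leadingCoeff.trans hp.leadingCoeff.symm)
    rwa [hdp'] at this
  have hzero : ∀ m : ℕ, d ≤ m →
      PowerSeries.coeff m ((p' : PowerSeries A) - (p : PowerSeries A)) = 0 := by
    intro m hm
    rw [← Polynomial.coe_sub, Polynomial.coeff_coe]
    exact Polynomial.coeff_eq_zero_of_degree_lt
      (lt_of_lt_of_le hdeg (by exact_mod_cast hm))
  have hpc : ∀ b : ℕ, d < b → p.coeff b = 0 := fun b hb =>
    Polynomial.coeff_eq_zero_of_natDegree_lt (by omega)
  have hpcd : p.coeff d = 1 := by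
    have := hp.leadingCoeff
    rwa [Polynomial.leadingCoeff, hpd] at this
  -- all coefficients of w lie in every power of M
  have hkey : ∀ k j : ℕ, PowerSeries.coeff j w ∈ M ^ k := by
    intro k
    induction k with
    | zero => intro j; simp
    | succ k ih =>
      intro j
      have hmem : ((j, d) : ℕ × ℕ) ∈ Finset.HasAntidiagonal.antidiagonal (d + j) := by
        rw [Finset.HasAntidiagonal.mem_antidiagonal]; omega
      have hsplit := Finset.sum_eq_sum_sdiff_singleton_add hmem
        (fun q : ℕ × ℕ => PowerSeries.coeff q.1 w * PowerSeries.coeff q.2 (p : PowerSeries A))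
      have htot : ∑ q ∈ Finset.HasAntidiagonal.antidiagonal (d + j),
          PowerSeries.coeff q.1 w * PowerSeries.coeff q.2 (p : PowerSeries A) = 0 := by
        rw [← PowerSeries.coeff_mul, hwp, hzero (d + j) (by omega)]
      have hcd : PowerSeries.coeff d (p : PowerSeries A) = 1 := by
        rw [Polynomial.coeff_coe, hpcd]
      rw [htot, hcd, mul_one] at hsplit
      have hwj : PowerSeries.coeff j w =
          - ∑ q ∈ Finset.HasAntidiagonal.antidiagonal (d + j) \ {((j, d) : ℕ × ℕ)},
            PowerSeries.coeff q.1 w * PowerSeries.coeff q.2 (p : PowerSeries A) :=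
        eq_neg_of_add_eq_zero_right hsplit.symm
      rw [hwj]
      refine neg_mem (Ideal.sum_mem _ fun q hq => ?_)
      rw [Finset.mem_sdiff, Finset.HasAntidiagonal.mem_antidiagonal, Finset.mem_singleton] at hq
      obtain ⟨hq1, hq2⟩ := hq
      rcases lt_trichotomy q.2 d with hb | hb | hb
      · rw [pow_succ, Polynomial.coeff_coe]
        exact Ideal.mul_mem_mul (ih q.1) (hpM q.2 hb)
      · exfalso; apply hq2; rw [Prod.ext_iff]; constructor <;> simp <;> omega
      · rw [Polynomial.coeff_coe, hpc q.2 hb, mul_zero]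
        exact zero_mem _
  -- w = 0
  have hw0 : w = 0 := PowerSeries.ext fun j => by
    rw [map_zero]
    exact wp_sep n K _ fun k => hM ▸ hkey k j
  have huone : u = 1 := Units.ext (by
    have : (u : PowerSeries A) - 1 = 0 := hw0
    rw [sub_eq_zero] at this
    simpa using this)
  have hαα' : α = α' := by
    rw [hu] at huone
    exact (inv_mul_eq_one.mp huone).symm
  refine ⟨hαα', ?_⟩
  have : (p : PowerSeries A) = (p' : PowerSeries A) := by
    have h2 := h1
    rw [hαα'] at h2
    exact mul_left_cancel₀ (Units.ne_zero α') h2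
  exact (Polynomial.coe_inj.mp this)
end
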